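/- Let A_t := ℚ[t][H]/(H⁵) and consider the twisted I-function I(t,q,z) := z·Σ_{d≥0} q^d · (Π_{j=1}^{5d}(5H + jz − t)) / (Π_{k=1}^{d}(H + kz)⁵), an element of A_t[z, z⁻¹][[q]] (each factor (H + kz)^{−1} is expanded as Σ_{i=0}^{4}(−1)^i H^i (kz)^{−i−1}, using H⁵ = 0). Let D_H := z·q·d/dq + H. Then (D_H⁵ − q·Π_{k=1}^{5}(5D_H + kz − t)) I(t,q,z) = 0, where each factor denotes composition of the operators f ↦ 5D_H(f) + (kz − t)·f. (This is the Picard–Fuchs equation satisfied by the I-function of the twisted Gromov–Witten theory of ℙ⁴.) -/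

import Mathlib

noncomputable section

open LaurentPolynomial

/-- The ring `A_t = ℚ[t][H]/(H⁵)`, where `ℚ[t]` is `Polynomial ℚ` and `H` is the
variable of the outer polynomial ring. -/
abbrev Aring : Type :=
  Polynomial (Polynomial ℚ) ⧸
    Ideal.span ({Polynomial.X ^ 5} : Set (Polynomial (Polynomial ℚ)))

/-- The class `H ∈ A_t`. -/
def Hcl : Aring := Ideal.Quotient.mk _ Polynomial.X

/-- The equivariant parameter `t ∈ A_t`. -/
def tcl : Aring := Ideal.Quotient.mk _ (Polynomial.C Polynomial.X)

/-- The ring `A_t[z, z⁻¹]` of Laurent polynomials in `z` over `A_t`. -/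
abbrev Rring : Type := LaurentPolynomial Aring

instance : CommSemiring Rring := @AddMonoidAlgebra.commSemiring Aring ℤ inferInstance inferInstance

/-- The variable `z ∈ A_t[z, z⁻¹]`. -/
def zL : Rring := T 1

/-- `H` viewed in `A_t[z, z⁻¹]`. -/
def HL : Rring := LaurentPolynomial.C Hcl

/-- `t` viewed in `A_t[z, z⁻¹]`. -/
def tL : Rring := LaurentPolynomial.C tcl

/-- The expansion of `(H + kz)⁻¹` as `Σ_{i=0}^{4} (−1)^i H^i (kz)^{−i−1}` (using `H⁵ = 0`). -/
def Einv (k : ℕ) : Rring :=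
  ∑ i ∈ Finset.range 5,
    (-1 : Rring) ^ i * HL ^ i * algebraMap ℚ Rring (1 / (k : ℚ) ^ (i + 1)) * T (-(i + 1) : ℤ)

/-- The twisted `I`-function
`I(t,q,z) = z·Σ_{d≥0} q^d (Π_{j=1}^{5d}(5H + jz − t)) / (Π_{k=1}^{d}(H + kz)⁵)`,
an element of `A_t[z,z⁻¹][[q]]`. -/
def Itwist : PowerSeries Rring :=
  PowerSeries.mk fun d =>
    zL * (∏ j ∈ Finset.Icc 1 (5 * d), (5 * HL + (j : Rring) * zL - tL))
      * ∏ k ∈ Finset.Icc 1 d, (Einv k) ^ 5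

/-- The operator `z·q·d/dq`. -/
def zqd (f : PowerSeries Rring) : PowerSeries Rring :=
  PowerSeries.mk fun n => (n : Rring) * zL * PowerSeries.coeff n f

/-- The operator `D_H = z·q·d/dq + H`. -/
def DH (f : PowerSeries Rring) : PowerSeries Rring :=
  zqd f + PowerSeries.C HL * f

/-- The operator `f ↦ 5·D_H(f) + (kz − t)·f`. -/
def opk (k : ℕ) (f : PowerSeries Rring) : PowerSeries Rring :=
  5 * DH f + PowerSeries.C ((k : Rring) * zL - tL) * f

instance RringCommRing : CommRing Rring := @AddMonoidAlgebra.commRing Aring ℤ inferInstance inferInstance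

lemma Hcl5 : Hcl ^ 5 = 0 := by
  rw [Hcl, ← map_pow, Ideal.Quotient.eq_zero_iff_mem]
  exact Ideal.subset_span rfl

lemma HL5 : HL ^ 5 = 0 := by
  rw [HL, ← map_pow, Hcl5, map_zero]

lemma key (k : ℕ) (hk : 1 ≤ k) : (HL + (k : Rring) * zL) * Einv k = 1 := by
  have hkQ : ((k : ℚ)) ≠ 0 := Nat.cast_ne_zero.mpr (by omega)
  set u : Rring := algebraMap ℚ Rring (1 / (k : ℚ)) with hu
  have hc : ∀ i : ℕ, algebraMap ℚ Rring (1 / (k : ℚ) ^ (i + 1)) = u ^ (i + 1) := by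
    intro i
    rw [hu, ← map_pow, one_div, one_div, inv_pow]
  have hku : (k : Rring) * u = 1 := by
    rw [hu, ← map_natCast (algebraMap ℚ Rring) k, ← map_mul]
    rw [mul_one_div, div_self hkQ, map_one]
  set w : Rring := T (-1) with hw
  have hT : ∀ i : ℕ, (T (-(i + 1) : ℤ) : Rring) = w ^ (i + 1) := by
    intro i
    rw [hw, T_pow]
    congr 1
    push_cast
    ring
  have hzw : zL * w = 1 := by
    rw [zL, hw, ← T_add]
    norm_num [T_zero]
  rw [Einv]
  simp only [Finset.sum_range_succ, Finset.sum_range_zero, hc, hT]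
  linear_combination (k * u * (1 - HL * u * w + HL^2 * u^2 * w^2 - HL^3 * u^3 * w^3 + HL^4 * u^4 * w^4)) * hzw
    + (1 - HL * u * w + HL^2 * u^2 * w^2 - HL^3 * u^3 * w^3 + HL^4 * u^4 * w^4) * hku
    + (u^5 * w^5) * HL5

lemma coeff_DH (n : ℕ) (f : PowerSeries Rring) :
    PowerSeries.coeff n (DH f) = ((n : Rring) * zL + HL) * PowerSeries.coeff n f := by
  rw [DH, map_add, zqd, PowerSeries.coeff_mk, PowerSeries.coeff_C_mul]
  ring

lemma coeff_opk (k n : ℕ) (f : PowerSeries Rring) :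
    PowerSeries.coeff n (opk k f)
      = (5 * ((n : Rring) * zL + HL) + ((k : Rring) * zL - tL))
        * PowerSeries.coeff n f := by
  rw [opk, map_add, show (5 : PowerSeries Rring) = PowerSeries.C 5 from (map_ofNat _ 5).symm,
    PowerSeries.coeff_C_mul, PowerSeries.coeff_C_mul, coeff_DH]
  ring

set_option maxRecDepth 16000 in
set_option maxHeartbeats 2000000 in
/-- The Picard–Fuchs equation for the twisted `I`-function:
`(D_H⁵ − q·Π_{k=1}^{5}(5D_H + kz − t)) I(t,q,z) = 0`. -/
theorem statement3 :
    DH (DH (DH (DH (DH Itwist))))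
      - PowerSeries.X * opk 1 (opk 2 (opk 3 (opk 4 (opk 5 Itwist)))) = 0 := by
  refine PowerSeries.ext fun n => ?_
  rw [map_sub, map_zero, sub_eq_zero]
  cases n with
  | zero =>
      rw [PowerSeries.coeff_zero_X_mul]
      simp only [coeff_DH, Itwist, PowerSeries.coeff_mk, Nat.cast_zero, zero_mul, zero_add,
        Nat.mul_zero, Finset.Icc_eq_empty_of_lt (by norm_num : (1:ℕ) > 0), Finset.prod_empty,
        mul_one]
      linear_combination zL * HL5
  | succ d =>
      rw [PowerSeries.coeff_succ_X_mul]
      simp only [coeff_DH, coeff_opk, Itwist, PowerSeries.coeff_mk]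
      have hE : (∏ k ∈ Finset.Icc 1 (d + 1), (Einv k) ^ 5)
          = (∏ k ∈ Finset.Icc 1 d, (Einv k) ^ 5) * (Einv (d + 1)) ^ 5 :=
        Finset.prod_Icc_succ_top (by omega) _
      have h5 : 5 * (d + 1) = 5 * d + 1 + 1 + 1 + 1 + 1 := by ring
      have hP : (∏ j ∈ Finset.Icc 1 (5 * (d + 1)), (5 * HL + (j : Rring) * zL - tL))
          = (∏ j ∈ Finset.Icc 1 (5 * d), (5 * HL + (j : Rring) * zL - tL))
            * (5 * HL + ((5 * d + 1 : ℕ) : Rring) * zL - tL)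
            * (5 * HL + ((5 * d + 2 : ℕ) : Rring) * zL - tL)
            * (5 * HL + ((5 * d + 3 : ℕ) : Rring) * zL - tL)
            * (5 * HL + ((5 * d + 4 : ℕ) : Rring) * zL - tL)
            * (5 * HL + ((5 * d + 5 : ℕ) : Rring) * zL - tL) := by
        rw [h5, Finset.prod_Icc_succ_top (by omega), Finset.prod_Icc_succ_top (by omega),
          Finset.prod_Icc_succ_top (by omega), Finset.prod_Icc_succ_top (by omega),
          Finset.prod_Icc_succ_top (by omega)]
      have hone : ((HL + ((d + 1 : ℕ) : Rring) * zL) * Einv (d + 1)) ^ 5 = 1 := by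
        rw [key (d + 1) (by omega), one_pow]
      rw [hE, hP]
      push_cast
      push_cast at hone
      linear_combination (zL * (∏ j ∈ Finset.Icc 1 (5 * d), (5 * HL + (j : Rring) * zL - tL))
          * (∏ k ∈ Finset.Icc 1 d, (Einv k) ^ 5)
          * (5 * HL + ((5 * (d : Rring)) + 1) * zL - tL)
          * (5 * HL + ((5 * (d : Rring)) + 2) * zL - tL)
          * (5 * HL + ((5 * (d : Rring)) + 3) * zL - tL)
          * (5 * HL + ((5 * (d : Rring)) + 4) * zL - tL)
          * (5 * HL + ((5 * (d : Rring)) + 5) * zL - tL)) * hone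

end
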